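/- arXiv:2305.04712 — 2 statements merged into one kernel-verified Lean document; each statement's English description precedes it below -/
import Mathlib

section
/- Let X be a random vector in R^D with E||X||_2² ≤ M, let V_d be a fixed D×d matrix with orthonormal columns, and let V̂ be a random D×d matrix with orthonormal columns that is independent of X. Let Z ~ N(0, σ²I_D) be independent of (X, V̂). Then W₂(V̂ V̂^T X + Z, V_d V_d^T X + Z) ≤ (M · E||V̂ V̂^T − V_d V_d^T||_F²)^{1/2}, where ||·||_F is the Frobenius norm. -/
open MeasureTheory ProbabilityTheory Real
open scoped ENNReal NNReal RealInnerProductSpace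

noncomputable section

/-- The isotropic Gaussian measure `N(0, σ²I_D)` on `ℝ^D`. -/
def stdGaussian (D : ℕ) (σ : ℝ) : Measure (EuclideanSpace ℝ (Fin D)) :=
  (Measure.pi fun _ : Fin D => gaussianReal 0 ⟨σ ^ 2, sq_nonneg σ⟩).map
    (MeasurableEquiv.toLp 2 (Fin D → ℝ))

/-- Differential entropy `h(μ) = -∫ p log p` of a measure on `ℝ^D`
(with `p` the density w.r.t. Lebesgue measure). -/
def diffEntropy {D : ℕ} (μ : Measure (EuclideanSpace ℝ (Fin D))) : ℝ :=
  -∫ x, (μ.rnDeriv volume x).toReal * Real.log (μ.rnDeriv volume x).toReal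

/-- The 2-Wasserstein distance `W₂(μ,ν) = (inf over couplings of E‖A-B‖²)^(1/2)`. -/
def W2 {D : ℕ} (μ ν : Measure (EuclideanSpace ℝ (Fin D))) : ℝ :=
  Real.sqrt (sInf {r : ℝ |
    ∃ γ : Measure (EuclideanSpace ℝ (Fin D) × EuclideanSpace ℝ (Fin D)),
      IsProbabilityMeasure γ ∧ γ.map Prod.fst = μ ∧ γ.map Prod.snd = ν ∧
      r = ∫ p, ‖p.1 - p.2‖ ^ 2 ∂γ})

/-- The `D × D` projection matrix `V Vᵀ` associated with columns `V_1,...,V_d`. -/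
def projMatrix {D d : ℕ} (V : Fin d → EuclideanSpace ℝ (Fin D)) : Matrix (Fin D) (Fin D) ℝ :=
  Matrix.of fun i k => ∑ j, V j i * V j k

/-- Squared Frobenius norm of a matrix. -/
def frobSq {D : ℕ} (A : Matrix (Fin D) (Fin D) ℝ) : ℝ := ∑ i, ∑ k, (A i k) ^ 2

section AuxLemmas
variable {D d : ℕ}

lemma euclid_norm_sq (y : EuclideanSpace ℝ (Fin D)) : ‖y‖ ^ 2 = ∑ i, (y i) ^ 2 := by
  rw [EuclideanSpace.norm_eq, Real.sq_sqrt (by positivity)]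
  simp [Real.norm_eq_abs, sq_abs]

lemma piLp_sum_apply {ι : Type*} (s : Finset ι) (f : ι → EuclideanSpace ℝ (Fin D)) (i : Fin D) :
    (∑ j ∈ s, f j) i = ∑ j ∈ s, f j i := by
  induction s using Finset.cons_induction with
  | empty => rfl
  | cons a s h ih => rw [Finset.sum_cons, Finset.sum_cons, PiLp.add_apply, ih]

lemma coord_sum (W : Fin d → EuclideanSpace ℝ (Fin D)) (x : EuclideanSpace ℝ (Fin D)) (i : Fin D) :
    (∑ j, ⟪W j, x⟫ • W j : EuclideanSpace ℝ (Fin D)) i = ∑ k, projMatrix W i k * x k := by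
  rw [piLp_sum_apply]
  simp only [PiLp.smul_apply, smul_eq_mul, PiLp.inner_apply,
    RCLike.inner_apply, conj_trivial, projMatrix, Matrix.of_apply, Finset.sum_mul]
  rw [Finset.sum_comm]
  exact Finset.sum_congr rfl fun j _ => Finset.sum_congr rfl fun l _ => by ring

lemma key_pointwise (W V : Fin d → EuclideanSpace ℝ (Fin D)) (x : EuclideanSpace ℝ (Fin D)) :
    ‖(∑ j, ⟪W j, x⟫ • W j) - (∑ j, ⟪V j, x⟫ • V j)‖ ^ 2
      ≤ frobSq (projMatrix W - projMatrix V) * ‖x‖ ^ 2 := by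
  rw [euclid_norm_sq, euclid_norm_sq]
  have hc : ∀ i, ((∑ j, ⟪W j, x⟫ • W j) - (∑ j, ⟪V j, x⟫ • V j) : EuclideanSpace ℝ (Fin D)) i
      = ∑ k, (projMatrix W - projMatrix V) i k * x k := by
    intro i
    simp only [PiLp.sub_apply, coord_sum, Matrix.sub_apply, sub_mul, Finset.sum_sub_distrib]
  calc ∑ i, (((∑ j, ⟪W j, x⟫ • W j) - (∑ j, ⟪V j, x⟫ • V j) : EuclideanSpace ℝ (Fin D)) i) ^ 2
      = ∑ i, (∑ k, (projMatrix W - projMatrix V) i k * x k) ^ 2 := by simp_rw [hc]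
    _ ≤ ∑ i, (∑ k, ((projMatrix W - projMatrix V) i k) ^ 2) * (∑ k, (x k) ^ 2) :=
        Finset.sum_le_sum fun i _ => Finset.sum_mul_sq_le_sq_mul_sq _ _ _
    _ = frobSq (projMatrix W - projMatrix V) * ∑ k, (x k) ^ 2 := by
        rw [frobSq, Finset.sum_mul]

lemma abs_coord_le_one (V : Fin d → EuclideanSpace ℝ (Fin D)) (h : Orthonormal ℝ V)
    (j : Fin d) (i : Fin D) : |V j i| ≤ 1 := by
  have h1 : (V j i) ^ 2 ≤ ∑ i', (V j i') ^ 2 :=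
    Finset.single_le_sum (f := fun i' => (V j i') ^ 2) (fun _ _ => sq_nonneg _) (Finset.mem_univ i)
  have h2 : ∑ i', (V j i') ^ 2 = 1 := by
    rw [← euclid_norm_sq, h.1 j]; norm_num
  nlinarith [abs_nonneg (V j i), sq_abs (V j i)]

lemma abs_proj_entry_le (V : Fin d → EuclideanSpace ℝ (Fin D)) (h : Orthonormal ℝ V)
    (i k : Fin D) : |projMatrix V i k| ≤ d := by
  calc |∑ j, V j i * V j k| ≤ ∑ j, |V j i * V j k| := Finset.abs_sum_le_sum_abs _ _
    _ ≤ ∑ _j : Fin d, (1 : ℝ) := Finset.sum_le_sum fun j _ => by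
        rw [abs_mul]
        exact mul_le_one₀ (abs_coord_le_one V h j i) (abs_nonneg _) (abs_coord_le_one V h j k)
    _ = d := by simp

lemma frobSq_diff_le (W V : Fin d → EuclideanSpace ℝ (Fin D)) (hW : Orthonormal ℝ W)
    (hV : Orthonormal ℝ V) :
    frobSq (projMatrix W - projMatrix V) ≤ D * D * (2 * d) ^ 2 := by
  have : ∀ i k : Fin D, ((projMatrix W - projMatrix V) i k) ^ 2 ≤ (2 * d) ^ 2 := by
    intro i k
    have h1 := abs_proj_entry_le W hW i k
    have h2 := abs_proj_entry_le V hV i k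
    have : |(projMatrix W - projMatrix V) i k| ≤ 2 * d := by
      rw [Matrix.sub_apply]
      calc |projMatrix W i k - projMatrix V i k| ≤ |projMatrix W i k| + |projMatrix V i k| :=
        abs_sub _ _
      _ ≤ 2 * d := by linarith
    nlinarith [abs_nonneg ((projMatrix W - projMatrix V) i k), sq_abs ((projMatrix W - projMatrix V) i k)]
  calc frobSq (projMatrix W - projMatrix V) ≤ ∑ _i : Fin D, ∑ _k : Fin D, (2 * d : ℝ) ^ 2 :=
      Finset.sum_le_sum fun i _ => Finset.sum_le_sum fun k _ => this i k
    _ = D * D * (2 * d) ^ 2 := by simp; ring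

end AuxLemmas

/-- for a fixed orthonormal `V_d` and a random orthonormal `V̂` independent of
`X` (with `E‖X‖² ≤ M`) and `Z ~ N(0,σ²I_D)` independent of `(X,V̂)`,
`W₂(V̂V̂ᵀX + Z, V_dV_dᵀX + Z) ≤ (M · E‖V̂V̂ᵀ − V_dV_dᵀ‖_F²)^{1/2}`. -/
theorem wasserstein_estimated_projection_bound
    {D d : ℕ} {Ω : Type*} [MeasurableSpace Ω] (P : Measure Ω) [IsProbabilityMeasure P]
    (X Z : Ω → EuclideanSpace ℝ (Fin D)) (hX : Measurable X) (hZ : Measurable Z)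
    (M : ℝ) (hX2 : Integrable (fun ω => ‖X ω‖ ^ 2) P) (hM : ∫ ω, ‖X ω‖ ^ 2 ∂P ≤ M)
    (Vd : Fin d → EuclideanSpace ℝ (Fin D)) (hVdON : Orthonormal ℝ Vd)
    (Vhat : Ω → Fin d → EuclideanSpace ℝ (Fin D)) (hVhatMeas : Measurable Vhat)
    (hVhatON : ∀ ω, Orthonormal ℝ (Vhat ω))
    (hVhatX : IndepFun Vhat X P)
    (σ : ℝ) (hσ : 0 < σ) (hZlaw : P.map Z = stdGaussian D σ)
    (hZindep : IndepFun (fun ω => (X ω, Vhat ω)) Z P) :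
    W2 (P.map fun ω => (∑ j, ⟪Vhat ω j, X ω⟫ • Vhat ω j) + Z ω)
       (P.map fun ω => (∑ j, ⟪Vd j, X ω⟫ • Vd j) + Z ω)
      ≤ Real.sqrt (M * ∫ ω, frobSq (projMatrix (Vhat ω) - projMatrix Vd) ∂P) := by
  classical
  set A : Ω → EuclideanSpace ℝ (Fin D) :=
    fun ω => (∑ j, ⟪Vhat ω j, X ω⟫ • Vhat ω j) + Z ω with hA
  set B : Ω → EuclideanSpace ℝ (Fin D) :=
    fun ω => (∑ j, ⟪Vd j, X ω⟫ • Vd j) + Z ω with hB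
  set F : Ω → ℝ := fun ω => frobSq (projMatrix (Vhat ω) - projMatrix Vd) with hFdef
  have hVj : ∀ j, Measurable fun ω => Vhat ω j := fun j =>
    (measurable_pi_apply j).comp hVhatMeas
  have hAmeas : Measurable A := by
    apply Measurable.add ?_ hZ
    apply Finset.measurable_sum
    intro j _
    exact (Measurable.inner (𝕜 := ℝ) (hVj j) hX).smul (hVj j)
  have hBmeas : Measurable B := by
    apply Measurable.add ?_ hZ
    apply Finset.measurable_sum
    intro j _
    exact (Measurable.inner (𝕜 := ℝ) measurable_const hX).smul measurable_const
  have hφmeas : Measurable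
      (fun V : Fin d → EuclideanSpace ℝ (Fin D) => frobSq (projMatrix V - projMatrix Vd)) := by
    unfold frobSq projMatrix
    apply Finset.measurable_sum
    intro i _
    apply Finset.measurable_sum
    intro k _
    apply Measurable.pow_const
    simp only [Matrix.sub_apply, Matrix.of_apply]
    apply Measurable.sub ?_ measurable_const
    apply Finset.measurable_sum
    intro j _
    fun_prop
  have hFmeas : Measurable F := hφmeas.comp hVhatMeas
  have hFnonneg : ∀ ω, 0 ≤ F ω := fun ω =>
    Finset.sum_nonneg fun i _ => Finset.sum_nonneg fun k _ => sq_nonneg _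
  have hFbd : ∀ ω, ‖F ω‖ ≤ D * D * (2 * d) ^ 2 := fun ω => by
    rw [Real.norm_eq_abs, abs_of_nonneg (hFnonneg ω)]
    exact frobSq_diff_le _ _ (hVhatON ω) hVdON
  have hFint : Integrable F P :=
    ⟨hFmeas.aestronglyMeasurable, HasFiniteIntegral.of_bounded (ae_of_all _ hFbd)⟩
  have hintFX : Integrable (fun ω => F ω * ‖X ω‖ ^ 2) P :=
    hX2.bdd_mul hFmeas.aestronglyMeasurable (ae_of_all _ hFbd)
  have hIndep : IndepFun F (fun ω => ‖X ω‖ ^ 2) P :=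
    hVhatX.comp hφmeas (measurable_norm.pow_const 2)
  have hprod : ∫ ω, F ω * ‖X ω‖ ^ 2 ∂P = (∫ ω, F ω ∂P) * ∫ ω, ‖X ω‖ ^ 2 ∂P :=
    hIndep.integral_mul_eq_mul_integral hFint.aestronglyMeasurable hX2.aestronglyMeasurable
  have hFInonneg : 0 ≤ ∫ ω, F ω ∂P := integral_nonneg hFnonneg
  have hpt : ∀ ω, ‖A ω - B ω‖ ^ 2 ≤ F ω * ‖X ω‖ ^ 2 := by
    intro ω
    calc ‖A ω - B ω‖ ^ 2
        = ‖(∑ j, ⟪Vhat ω j, X ω⟫ • Vhat ω j) - (∑ j, ⟪Vd j, X ω⟫ • Vd j)‖ ^ 2 := by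
          rw [hA, hB]
          simp only [add_sub_add_right_eq_sub]
      _ ≤ F ω * ‖X ω‖ ^ 2 := key_pointwise _ _ _
  have hABmeas : Measurable fun ω => (A ω, B ω) := hAmeas.prodMk hBmeas
  have hmem : (∫ ω, ‖A ω - B ω‖ ^ 2 ∂P) ∈ {r : ℝ |
      ∃ γ : Measure (EuclideanSpace ℝ (Fin D) × EuclideanSpace ℝ (Fin D)),
        IsProbabilityMeasure γ ∧ γ.map Prod.fst = P.map A ∧ γ.map Prod.snd = P.map B ∧
        r = ∫ p, ‖p.1 - p.2‖ ^ 2 ∂γ} := by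
    refine ⟨P.map (fun ω => (A ω, B ω)), Measure.isProbabilityMeasure_map hABmeas.aemeasurable,
      ?_, ?_, ?_⟩
    · rw [Measure.map_map measurable_fst hABmeas]; rfl
    · rw [Measure.map_map measurable_snd hABmeas]; rfl
    · rw [integral_map (f := fun p : EuclideanSpace ℝ (Fin D) × EuclideanSpace ℝ (Fin D) => ‖p.1 - p.2‖ ^ 2) hABmeas.aemeasurable
        (((continuous_fst.sub continuous_snd).norm.pow 2).aestronglyMeasurable)]
  have hbdd : BddBelow {r : ℝ |
      ∃ γ : Measure (EuclideanSpace ℝ (Fin D) × EuclideanSpace ℝ (Fin D)),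
        IsProbabilityMeasure γ ∧ γ.map Prod.fst = P.map A ∧ γ.map Prod.snd = P.map B ∧
        r = ∫ p, ‖p.1 - p.2‖ ^ 2 ∂γ} := by
    refine ⟨0, fun r hr => ?_⟩
    obtain ⟨γ, hγ, -, -, hreq⟩ := hr
    rw [hreq]
    exact integral_nonneg fun p => by positivity
  unfold W2
  apply Real.sqrt_le_sqrt
  refine le_trans (csInf_le hbdd hmem) ?_
  calc ∫ ω, ‖A ω - B ω‖ ^ 2 ∂P
      ≤ ∫ ω, F ω * ‖X ω‖ ^ 2 ∂P :=
        integral_mono_of_nonneg (ae_of_all _ fun ω => by positivity) hintFX (ae_of_all _ hpt)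
    _ = (∫ ω, F ω ∂P) * ∫ ω, ‖X ω‖ ^ 2 ∂P := hprod
    _ ≤ (∫ ω, F ω ∂P) * M := mul_le_mul_of_nonneg_left hM hFInonneg
    _ = M * ∫ ω, F ω ∂P := mul_comm _ _
end
end

section
/- Let A be a D×D symmetric positive semidefinite matrix with eigenvalues λ_1 > ... > λ_D and let δ_d = (λ_d − λ_{d+1})/2 > 0 for some 1 ≤ d < D. Let B be a D×D symmetric matrix with ||B||_F < δ_d/2. Let P_d(A) and P_d(A+B) denote the orthogonal projection matrices onto the span of the top-d eigenvectors of A and of A+B respectively. Then ||P_d(A+B) − P_d(A)||_F ≤ ||B||_F / δ_d. -/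
open MeasureTheory ProbabilityTheory Real
open scoped ENNReal NNReal RealInnerProductSpace

noncomputable section

/-- Frobenius norm of a matrix. -/
def frobNorm {D : ℕ} (A : Matrix (Fin D) (Fin D) ℝ) : ℝ :=
  Real.sqrt (∑ i, ∑ k, (A i k) ^ 2)


lemma ip_eq {D : ℕ} (x y : EuclideanSpace ℝ (Fin D)) : ⟪x, y⟫ = ∑ k, x k * y k := by
  simp [PiLp.inner_apply, RCLike.inner_apply, conj_trivial]
  exact Finset.sum_congr rfl fun _ _ => mul_comm _ _

lemma dk_parseval {D : ℕ} (V : Fin D → EuclideanSpace ℝ (Fin D)) (hV : Orthonormal ℝ V)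
    (x y : EuclideanSpace ℝ (Fin D)) :
    ∑ i, (∑ k, x k * V i k) * (∑ k, V i k * y k) = ∑ k, x k * y k := by
  have hb : Fintype.card (Fin D) = Module.finrank ℝ (EuclideanSpace ℝ (Fin D)) := by
    simp [finrank_euclideanSpace_fin]
  by_cases hD : D = 0
  · subst hD; simp
  have : Nonempty (Fin D) := ⟨⟨0, Nat.pos_of_ne_zero hD⟩⟩
  set b : Module.Basis (Fin D) ℝ (EuclideanSpace ℝ (Fin D)) :=
    basisOfLinearIndependentOfCardEqFinrank hV.linearIndependent hb with hbdef
  have hcoe : ⇑b = V := coe_basisOfLinearIndependentOfCardEqFinrank _ _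
  have hON : Orthonormal ℝ ⇑b := hcoe ▸ hV
  have := (b.toOrthonormalBasis hON).sum_inner_mul_inner x y
  simp only [Module.Basis.coe_toOrthonormalBasis, hcoe, ip_eq] at this
  exact this

lemma dk_eig_inner {D : ℕ} (M : Matrix (Fin D) (Fin D) ℝ) (hM : M.IsSymm)
    (lam : Fin D → ℝ) (V : Fin D → EuclideanSpace ℝ (Fin D))
    (heig : ∀ j i : Fin D, ∑ k, M i k * V j k = lam j * V j i)
    (x : EuclideanSpace ℝ (Fin D)) (i : Fin D) :
    ∑ l, (∑ k, M l k * x k) * V i l = lam i * ∑ l, V i l * x l := by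
  have hsym : ∀ l k, M l k = M k l := fun l k => by
    have := congrFun (congrFun hM k) l
    simpa [Matrix.transpose_apply] using this
  calc ∑ l, (∑ k, M l k * x k) * V i l
      = ∑ l, ∑ k, (M k l * V i l) * x k := by
        refine Finset.sum_congr rfl fun l _ => ?_
        rw [Finset.sum_mul]
        exact Finset.sum_congr rfl fun k _ => by rw [hsym l k]; ring
    _ = ∑ k, (∑ l, M k l * V i l) * x k := by
        rw [Finset.sum_comm]
        refine Finset.sum_congr rfl fun k _ => ?_
        rw [Finset.sum_mul]
    _ = lam i * ∑ l, V i l * x l := by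
        simp_rw [heig i]
        rw [Finset.mul_sum]
        exact Finset.sum_congr rfl fun k _ => by ring

lemma dk_coeff_zero {D n : ℕ} (V : Fin D → EuclideanSpace ℝ (Fin D)) (hV : Orthonormal ℝ V)
    (f : Fin n → Fin D) (v : EuclideanSpace ℝ (Fin D))
    (hv : v ∈ Submodule.span ℝ (Set.range (V ∘ f))) (i : Fin D) (hi : ∀ j, f j ≠ i) :
    ∑ k, V i k * v k = 0 := by
  have hker : Submodule.span ℝ (Set.range (V ∘ f)) ≤
      LinearMap.ker ((innerSL ℝ (V i)).toLinearMap) := by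
    rw [Submodule.span_le]
    rintro _ ⟨j, rfl⟩
    simp only [SetLike.mem_coe, LinearMap.mem_ker, ContinuousLinearMap.coe_coe, innerSL_apply_apply]
    exact hV.2 (fun (h : i = f j) => hi j h.symm)
  have := hker hv
  simp only [LinearMap.mem_ker, ContinuousLinearMap.coe_coe, innerSL_apply_apply] at this
  rw [← ip_eq]; exact this

/-- Rayleigh quotient lower bound on a span of eigenvectors. -/
lemma dk_rayleigh_ge {D n : ℕ} (M : Matrix (Fin D) (Fin D) ℝ) (hM : M.IsSymm)
    (lam : Fin D → ℝ) (V : Fin D → EuclideanSpace ℝ (Fin D)) (hV : Orthonormal ℝ V)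
    (heig : ∀ j i : Fin D, ∑ k, M i k * V j k = lam j * V j i)
    (f : Fin n → Fin D) (v : EuclideanSpace ℝ (Fin D))
    (hv : v ∈ Submodule.span ℝ (Set.range (V ∘ f)))
    (hvn : ∑ k, v k * v k = 1) (t : ℝ) (ht : ∀ j, t ≤ lam (f j)) :
    t ≤ ∑ k, v k * (∑ l, M k l * v l) := by
  set a : Fin D → ℝ := fun i => ∑ k, V i k * v k with ha
  have h1 : ∀ i, (∑ k, v k * V i k) = a i := fun i =>
    Finset.sum_congr rfl fun k _ => mul_comm _ _
  have hsum : ∑ i, a i * a i = 1 := by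
    have := dk_parseval V hV v v
    rw [hvn] at this
    rw [← this]
    exact Finset.sum_congr rfl fun i _ => by rw [h1 i]
  have hray : ∑ k, v k * (∑ l, M k l * v l)
      = ∑ i, a i * (lam i * a i) := by
    have hp := dk_parseval V hV v (WithLp.toLp 2 (fun k => ∑ l, M k l * v l))
    simp only [WithLp.ofLp_toLp] at hp
    rw [← hp]
    refine Finset.sum_congr rfl fun i _ => ?_
    rw [h1 i]
    congr 1
    have he := dk_eig_inner M hM lam V heig v i
    rw [← he]
    exact Finset.sum_congr rfl fun k _ => mul_comm _ _
  rw [hray]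
  calc t = ∑ i, t * (a i * a i) := by rw [← Finset.mul_sum, hsum, mul_one]
    _ ≤ ∑ i, a i * (lam i * a i) := by
        refine Finset.sum_le_sum fun i _ => ?_
        by_cases hfi : ∃ j, f j = i
        · obtain ⟨j, rfl⟩ := hfi
          have h2 : 0 ≤ a (f j) * a (f j) := mul_self_nonneg _
          calc t * (a (f j) * a (f j)) ≤ lam (f j) * (a (f j) * a (f j)) :=
                mul_le_mul_of_nonneg_right (ht j) h2
            _ = a (f j) * (lam (f j) * a (f j)) := by ring
        · push_neg at hfi
          have : a i = 0 := dk_coeff_zero V hV f v hv i hfi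
          rw [this]; simp


/-- A nonzero common unit vector in two spans whose dimensions exceed `D`. -/
lemma dk_exists_unit {D m n : ℕ} (V W : Fin D → EuclideanSpace ℝ (Fin D))
    (hV : Orthonormal ℝ V) (hW : Orthonormal ℝ W)
    (f : Fin m → Fin D) (g : Fin n → Fin D)
    (hf : Function.Injective f) (hg : Function.Injective g) (hmn : D < m + n) :
    ∃ u : EuclideanSpace ℝ (Fin D), (∑ k, u k * u k = 1) ∧
      u ∈ Submodule.span ℝ (Set.range (V ∘ f)) ∧
      u ∈ Submodule.span ℝ (Set.range (W ∘ g)) := by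
  set s := Submodule.span ℝ (Set.range (V ∘ f))
  set t := Submodule.span ℝ (Set.range (W ∘ g))
  have hsl : LinearIndependent ℝ (V ∘ f) := hV.linearIndependent.comp f hf
  have htl : LinearIndependent ℝ (W ∘ g) := hW.linearIndependent.comp g hg
  have hs : Module.finrank ℝ s = m := by
    rw [finrank_span_eq_card hsl]; simp
  have ht : Module.finrank ℝ t = n := by
    rw [finrank_span_eq_card htl]; simp
  have hsum := Submodule.finrank_sup_add_finrank_inf_eq s t
  have hsup : Module.finrank ℝ ↥(s ⊔ t) ≤ D := by
    have := Submodule.finrank_le (s ⊔ t)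
    simpa [finrank_euclideanSpace_fin] using this
  have hinf : 0 < Module.finrank ℝ ↥(s ⊓ t) := by omega
  obtain ⟨v, hv, hvne⟩ : ∃ v ∈ s ⊓ t, v ≠ 0 := by
    by_contra h
    push_neg at h
    have hbot : s ⊓ t = ⊥ := by
      rw [Submodule.eq_bot_iff]
      exact fun x hx => by by_contra hne; exact hne (h x hx)
    rw [hbot, finrank_bot] at hinf
    exact lt_irrefl 0 hinf
  set u : EuclideanSpace ℝ (Fin D) := (1 / ‖v‖) • v with hu
  have hnv : ‖v‖ ≠ 0 := norm_ne_zero_iff.mpr hvne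
  refine ⟨u, ?_, ?_, ?_⟩
  · have : ⟪u, u⟫ = 1 := by
      rw [real_inner_smul_left, real_inner_smul_right, real_inner_self_eq_norm_sq]
      field_simp
    rw [← this, ip_eq]
  · exact Submodule.smul_mem s _ hv.1
  · exact Submodule.smul_mem t _ hv.2

/-- `|vᵀ B v| ≤ ‖B‖_F` for a unit vector `v`. -/
lemma dk_rayleigh_abs_le {D : ℕ} (B : Matrix (Fin D) (Fin D) ℝ)
    (v : EuclideanSpace ℝ (Fin D)) (hv : ∑ k, v k * v k = 1) :
    |∑ k, v k * (∑ l, B k l * v l)| ≤ frobNorm B := by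
  have hv2 : ∑ k, v k ^ 2 = 1 := by
    rw [← hv]; exact Finset.sum_congr rfl fun k _ => sq (v k)
  have hcs : (∑ k, v k * (∑ l, B k l * v l)) ^ 2 ≤
      (∑ k, v k ^ 2) * (∑ k, (∑ l, B k l * v l) ^ 2) :=
    Finset.sum_mul_sq_le_sq_mul_sq _ _ _
  have hrow : ∀ k : Fin D, (∑ l, B k l * v l) ^ 2 ≤ (∑ l, (B k l) ^ 2) * 1 := fun k => by
    rw [← hv2]
    exact Finset.sum_mul_sq_le_sq_mul_sq _ _ _
  have hquad : (∑ k, v k * (∑ l, B k l * v l)) ^ 2 ≤ ∑ k, ∑ l, (B k l) ^ 2 := by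
    calc (∑ k, v k * (∑ l, B k l * v l)) ^ 2
        ≤ (∑ k, v k ^ 2) * (∑ k, (∑ l, B k l * v l) ^ 2) := hcs
      _ = ∑ k, (∑ l, B k l * v l) ^ 2 := by rw [hv2, one_mul]
      _ ≤ ∑ k, ∑ l, (B k l) ^ 2 := Finset.sum_le_sum fun k _ => by
          simpa using hrow k
  have h1 : |∑ k, v k * (∑ l, B k l * v l)| =
      Real.sqrt ((∑ k, v k * (∑ l, B k l * v l)) ^ 2) := (Real.sqrt_sq_eq_abs _).symm
  rw [h1, frobNorm]
  exact Real.sqrt_le_sqrt hquad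

lemma dk_rayleigh_le {D n : ℕ} (M : Matrix (Fin D) (Fin D) ℝ) (hM : M.IsSymm)
    (lam : Fin D → ℝ) (V : Fin D → EuclideanSpace ℝ (Fin D)) (hV : Orthonormal ℝ V)
    (heig : ∀ j i : Fin D, ∑ k, M i k * V j k = lam j * V j i)
    (f : Fin n → Fin D) (v : EuclideanSpace ℝ (Fin D))
    (hv : v ∈ Submodule.span ℝ (Set.range (V ∘ f)))
    (hvn : ∑ k, v k * v k = 1) (t : ℝ) (ht : ∀ j, lam (f j) ≤ t) :
    ∑ k, v k * (∑ l, M k l * v l) ≤ t := by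
  have hMneg : (-M).IsSymm := by
    unfold Matrix.IsSymm at *
    rw [Matrix.transpose_neg, hM]
  have heigneg : ∀ j i : Fin D, ∑ k, (-M) i k * V j k = (-lam j) * V j i := by
    intro j i
    have := heig j i
    simp only [Matrix.neg_apply, neg_mul, Finset.sum_neg_distrib, this]
  have h := dk_rayleigh_ge (-M) hMneg (fun i => -lam i) V hV heigneg f v hv hvn (-t)
    (fun j => neg_le_neg (ht j))
  have hflip : ∑ k, v k * (∑ l, (-M) k l * v l) = -(∑ k, v k * (∑ l, M k l * v l)) := by
    rw [← Finset.sum_neg_distrib]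
    refine Finset.sum_congr rfl fun k _ => ?_
    rw [← mul_neg, ← Finset.sum_neg_distrib]
    congr 1
    exact Finset.sum_congr rfl fun l _ => by simp [Matrix.neg_apply]
  rw [hflip] at h
  linarith

lemma dk_rayleigh_add {D : ℕ} (A B : Matrix (Fin D) (Fin D) ℝ) (v : EuclideanSpace ℝ (Fin D)) :
    ∑ k, v k * (∑ l, (A + B) k l * v l)
      = (∑ k, v k * (∑ l, A k l * v l)) + ∑ k, v k * (∑ l, B k l * v l) := by
  rw [← Finset.sum_add_distrib]
  refine Finset.sum_congr rfl fun k _ => ?_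
  rw [← mul_add, ← Finset.sum_add_distrib]
  congr 1
  refine Finset.sum_congr rfl fun l _ => ?_
  rw [Matrix.add_apply]; ring

lemma dk_weyl1 {D : ℕ} (A B : Matrix (Fin D) (Fin D) ℝ)
    (hAsymm : A.IsSymm) (hABsymm : (A + B).IsSymm)
    (lamA : Fin D → ℝ) (VA : Fin D → EuclideanSpace ℝ (Fin D))
    (hVAON : Orthonormal ℝ VA)
    (heigA : ∀ j i : Fin D, ∑ k, A i k * VA j k = lamA j * VA j i)
    (lamA_anti : ∀ i j : Fin D, i ≤ j → lamA j ≤ lamA i)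
    (lamB : Fin D → ℝ) (VB : Fin D → EuclideanSpace ℝ (Fin D))
    (hVBON : Orthonormal ℝ VB)
    (heigB : ∀ j i : Fin D, ∑ k, (A + B) i k * VB j k = lamB j * VB j i)
    (hBdesc : ∀ i j : Fin D, i ≤ j → lamB j ≤ lamB i)
    (d : ℕ) (hd : 1 ≤ d) (hdD : d < D) :
    lamA ⟨d - 1, Nat.lt_of_le_of_lt (Nat.sub_le d 1) hdD⟩ - frobNorm B ≤
      lamB ⟨d - 1, Nat.lt_of_le_of_lt (Nat.sub_le d 1) hdD⟩ := by
  set i0 : Fin D := ⟨d - 1, by omega⟩ with hi0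
  set f : Fin d → Fin D := fun j => ⟨j.1, by omega⟩ with hfdef
  set g : Fin (D - (d - 1)) → Fin D := fun j => ⟨d - 1 + j.1, by omega⟩ with hgdef
  have hf : Function.Injective f := fun a b h => Fin.ext (by
    have := congrArg Fin.val h; simpa using this)
  have hg : Function.Injective g := fun a b h => Fin.ext (by
    have := congrArg Fin.val h; simp only [hgdef] at this; omega)
  have hmn : D < d + (D - (d - 1)) := by omega
  obtain ⟨u, hu1, huf, hug⟩ := dk_exists_unit VA VB hVAON hVBON f g hf hg hmn
  have hA : lamA i0 ≤ ∑ k, u k * (∑ l, A k l * u l) := by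
    refine dk_rayleigh_ge A hAsymm lamA VA hVAON heigA f u huf hu1 _ fun j => ?_
    refine lamA_anti (f j) i0 ?_
    simp only [hfdef, hi0, Fin.le_def]
    omega
  have hAB : ∑ k, u k * (∑ l, (A + B) k l * u l) ≤ lamB i0 := by
    refine dk_rayleigh_le (A + B) hABsymm lamB VB hVBON heigB g u hug hu1 _ fun j => ?_
    refine hBdesc i0 (g j) ?_
    simp only [hgdef, hi0, Fin.le_def]
    omega
  have hBb := dk_rayleigh_abs_le B u hu1
  have hadd := dk_rayleigh_add A B u
  have := abs_le.mp hBb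
  linarith [this.1, this.2]

lemma dk_weyl2 {D : ℕ} (A B : Matrix (Fin D) (Fin D) ℝ)
    (hAsymm : A.IsSymm) (hABsymm : (A + B).IsSymm)
    (lamA : Fin D → ℝ) (VA : Fin D → EuclideanSpace ℝ (Fin D))
    (hVAON : Orthonormal ℝ VA)
    (heigA : ∀ j i : Fin D, ∑ k, A i k * VA j k = lamA j * VA j i)
    (lamA_anti : ∀ i j : Fin D, i ≤ j → lamA j ≤ lamA i)
    (lamB : Fin D → ℝ) (VB : Fin D → EuclideanSpace ℝ (Fin D))
    (hVBON : Orthonormal ℝ VB)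
    (heigB : ∀ j i : Fin D, ∑ k, (A + B) i k * VB j k = lamB j * VB j i)
    (hBdesc : ∀ i j : Fin D, i ≤ j → lamB j ≤ lamB i)
    (d : ℕ) (hd : 1 ≤ d) (hdD : d < D) :
    lamB ⟨d, hdD⟩ ≤ lamA ⟨d, hdD⟩ + frobNorm B := by
  set i1 : Fin D := ⟨d, hdD⟩ with hi1
  set f : Fin (D - d) → Fin D := fun j => ⟨d + j.1, by omega⟩ with hfdef
  set g : Fin (d + 1) → Fin D := fun j => ⟨j.1, by omega⟩ with hgdef
  have hf : Function.Injective f := fun a b h => Fin.ext (by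
    have := congrArg Fin.val h; simp only [hfdef] at this; omega)
  have hg : Function.Injective g := fun a b h => Fin.ext (by
    have := congrArg Fin.val h; simpa using this)
  have hmn : D < (D - d) + (d + 1) := by omega
  obtain ⟨u, hu1, huf, hug⟩ := dk_exists_unit VA VB hVAON hVBON f g hf hg hmn
  have hA : ∑ k, u k * (∑ l, A k l * u l) ≤ lamA i1 := by
    refine dk_rayleigh_le A hAsymm lamA VA hVAON heigA f u huf hu1 _ fun j => ?_
    refine lamA_anti i1 (f j) ?_
    simp only [hfdef, hi1, Fin.le_def]
    omega
  have hAB : lamB i1 ≤ ∑ k, u k * (∑ l, (A + B) k l * u l) := by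
    refine dk_rayleigh_ge (A + B) hABsymm lamB VB hVBON heigB g u hug hu1 _ fun j => ?_
    refine hBdesc (g j) i1 ?_
    simp only [hgdef, hi1, Fin.le_def]
    omega
  have hBb := dk_rayleigh_abs_le B u hu1
  have hadd := dk_rayleigh_add A B u
  have := abs_le.mp hBb
  linarith [this.1, this.2]


lemma dk_proj_inner {D d₁ d₂ : ℕ} (X : Fin d₁ → EuclideanSpace ℝ (Fin D))
    (Y : Fin d₂ → EuclideanSpace ℝ (Fin D)) :
    ∑ i, ∑ k, (projMatrix X) i k * (projMatrix Y) i k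
      = ∑ j, ∑ j', (∑ r, X j r * Y j' r) ^ 2 := by
  simp only [projMatrix, Matrix.of_apply]
  calc ∑ i, ∑ k, (∑ j, X j i * X j k) * (∑ j', Y j' i * Y j' k)
      = ∑ i, ∑ k, ∑ j, ∑ j', (X j i * Y j' i) * (X j k * Y j' k) := by
        refine Finset.sum_congr rfl fun i _ => Finset.sum_congr rfl fun k _ => ?_
        rw [Finset.sum_mul_sum]
        exact Finset.sum_congr rfl fun j _ => Finset.sum_congr rfl fun j' _ => by ring
    _ = ∑ i, ∑ j, ∑ k, ∑ j', (X j i * Y j' i) * (X j k * Y j' k) :=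
        Finset.sum_congr rfl fun i _ => Finset.sum_comm
    _ = ∑ i, ∑ j, ∑ j', ∑ k, (X j i * Y j' i) * (X j k * Y j' k) :=
        Finset.sum_congr rfl fun i _ => Finset.sum_congr rfl fun j _ => Finset.sum_comm
    _ = ∑ j, ∑ i, ∑ j', ∑ k, (X j i * Y j' i) * (X j k * Y j' k) := Finset.sum_comm
    _ = ∑ j, ∑ j', ∑ i, ∑ k, (X j i * Y j' i) * (X j k * Y j' k) :=
        Finset.sum_congr rfl fun j _ => Finset.sum_comm
    _ = ∑ j, ∑ j', (∑ r, X j r * Y j' r) ^ 2 := by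
        refine Finset.sum_congr rfl fun j _ => Finset.sum_congr rfl fun j' _ => ?_
        rw [sq, Finset.sum_mul_sum]

lemma dk_sum_cast {D d : ℕ} (hdD : d ≤ D) (g : Fin D → ℝ) :
    ∑ j : Fin d, g (Fin.castLE hdD j)
      = ∑ i ∈ Finset.univ.filter (fun i : Fin D => (i : ℕ) < d), g i := by
  rw [← Finset.sum_image (f := g) (g := Fin.castLE hdD) (s := Finset.univ)
    (fun a _ b _ h => Fin.castLE_injective hdD h)]
  congr 1
  ext i
  simp only [Finset.mem_image, Finset.mem_univ, true_and, Finset.mem_filter]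
  constructor
  · rintro ⟨j, rfl⟩; exact j.2
  · intro hi; exact ⟨⟨i.1, hi⟩, rfl⟩

/-- eigenprojection perturbation / Davis–Kahan type bound: if `A` is symmetric
positive semidefinite with distinct eigenvalues `λ_1 > ... > λ_D`, eigengap
`δ_d = (λ_d − λ_{d+1})/2 > 0`, and `B` is symmetric with `‖B‖_F < δ_d/2`, then the orthogonal
projections onto the top-`d` eigenspaces of `A + B` and of `A` satisfy
`‖P_d(A+B) − P_d(A)‖_F ≤ ‖B‖_F / δ_d`. -/
theorem eigenprojection_perturbation
    {D : ℕ} (A B : Matrix (Fin D) (Fin D) ℝ)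
    (hAsymm : A.IsSymm) (hApsd : A.PosSemidef) (hBsymm : B.IsSymm)
    (lamA : Fin D → ℝ) (VA : Fin D → EuclideanSpace ℝ (Fin D))
    (hVAON : Orthonormal ℝ VA)
    (heigA : ∀ j i : Fin D, ∑ k, A i k * VA j k = lamA j * VA j i)
    (hAstrict : ∀ i j : Fin D, i < j → lamA j < lamA i)
    (lamB : Fin D → ℝ) (VB : Fin D → EuclideanSpace ℝ (Fin D))
    (hVBON : Orthonormal ℝ VB)
    (heigB : ∀ j i : Fin D, ∑ k, (A + B) i k * VB j k = lamB j * VB j i)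
    (hBdesc : ∀ i j : Fin D, i ≤ j → lamB j ≤ lamB i)
    (d : ℕ) (hd : 1 ≤ d) (hdD : d < D)
    (δd : ℝ) (hδd : δd = (lamA ⟨d - 1, by omega⟩ - lamA ⟨d, hdD⟩) / 2) (hδdpos : 0 < δd)
    (hB : frobNorm B < δd / 2) :
    frobNorm (projMatrix (fun j : Fin d => VB (Fin.castLE hdD.le j))
        - projMatrix (fun j : Fin d => VA (Fin.castLE hdD.le j)))
      ≤ frobNorm B / δd := by
  classical
  set i0 : Fin D := ⟨d - 1, by omega⟩ with hi0def
  set i1 : Fin D := ⟨d, hdD⟩ with hi1def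
  have lamA_anti : ∀ i j : Fin D, i ≤ j → lamA j ≤ lamA i := by
    intro i j hij
    rcases eq_or_lt_of_le hij with h | h
    · rw [h]
    · exact (hAstrict i j h).le
  have hABsymm : (A + B).IsSymm := by
    unfold Matrix.IsSymm at *
    rw [Matrix.transpose_add, hAsymm, hBsymm]
  have hW1 : lamA i0 - frobNorm B ≤ lamB i0 :=
    dk_weyl1 A B hAsymm hABsymm lamA VA hVAON heigA lamA_anti lamB VB hVBON heigB hBdesc d hd hdD
  have hW2 : lamB i1 ≤ lamA i1 + frobNorm B :=
    dk_weyl2 A B hAsymm hABsymm lamA VA hVAON heigA lamA_anti lamB VB hVBON heigB hBdesc d hd hdD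
  have hfBnn : 0 ≤ frobNorm B := Real.sqrt_nonneg _
  -- inner products between the two eigenbases, and the matrix B in mixed bases
  set c : Fin D → Fin D → ℝ := fun i j => ∑ k, VA i k * VB j k with hcdef
  set b' : Fin D → Fin D → ℝ := fun i j => ∑ l, (∑ k, B l k * VB j k) * VA i l with hb'def
  have hR1 : ∀ i j : Fin D, b' i j = (lamB j - lamA i) * c i j := by
    intro i j
    have h1 : ∀ l, (∑ k, B l k * VB j k) = lamB j * VB j l - ∑ k, A l k * VB j k := by
      intro l
      have h2 := heigB j l
      have h3 : ∑ k, B l k * VB j k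
          = (∑ k, (A + B) l k * VB j k) - ∑ k, A l k * VB j k := by
        rw [← Finset.sum_sub_distrib]
        refine Finset.sum_congr rfl fun k _ => ?_
        rw [Matrix.add_apply]; ring
      rw [h3, h2]
    have h3 := dk_eig_inner A hAsymm lamA VA heigA (VB j) i
    have h4 : (∑ l, VB j l * VA i l) = ∑ l, VA i l * VB j l :=
      Finset.sum_congr rfl fun l _ => mul_comm _ _
    calc b' i j = ∑ l, (lamB j * VB j l - ∑ k, A l k * VB j k) * VA i l := by
          rw [hb'def]
          exact Finset.sum_congr rfl fun l _ => by rw [h1 l]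
      _ = lamB j * (∑ l, VB j l * VA i l) - ∑ l, (∑ k, A l k * VB j k) * VA i l := by
          rw [Finset.mul_sum, ← Finset.sum_sub_distrib]
          exact Finset.sum_congr rfl fun l _ => by ring
      _ = lamB j * (∑ l, VA i l * VB j l) - lamA i * (∑ l, VA i l * VB j l) := by
          rw [h3, h4]
      _ = (lamB j - lamA i) * c i j := by rw [hcdef]; ring
  -- the gap bounds
  have h2δ : lamA i0 - lamA i1 = 2 * δd := by rw [hδd]; ring
  have hgap1 : ∀ i j : Fin D, d ≤ (i : ℕ) → (j : ℕ) < d → δd ≤ lamB j - lamA i := by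
    intro i j hi hj
    have hji0 : j ≤ i0 := by rw [Fin.le_def]; simp only [hi0def]; omega
    have hi1i : i1 ≤ i := by rw [Fin.le_def]; simp only [hi1def]; omega
    have h1 := hBdesc j i0 hji0
    have h2 := lamA_anti i1 i hi1i
    linarith
  have hgap2 : ∀ i j : Fin D, (i : ℕ) < d → d ≤ (j : ℕ) → δd ≤ lamA i - lamB j := by
    intro i j hi hj
    have hii0 : i ≤ i0 := by rw [Fin.le_def]; simp only [hi0def]; omega
    have hi1j : i1 ≤ j := by rw [Fin.le_def]; simp only [hi1def]; omega
    have h1 := lamA_anti i i0 hii0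
    have h2 := hBdesc i1 j hi1j
    linarith
  have hkey1 : ∀ i j : Fin D, d ≤ (i : ℕ) → (j : ℕ) < d →
      (c i j) ^ 2 * δd ^ 2 ≤ (b' i j) ^ 2 := by
    intro i j hi hj
    have hg := hgap1 i j hi hj
    have h1 : δd ^ 2 ≤ (lamB j - lamA i) ^ 2 := pow_le_pow_left₀ hδdpos.le hg 2
    calc (c i j) ^ 2 * δd ^ 2 ≤ (c i j) ^ 2 * (lamB j - lamA i) ^ 2 :=
          mul_le_mul_of_nonneg_left h1 (sq_nonneg _)
      _ = (b' i j) ^ 2 := by rw [hR1 i j]; ring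
  have hkey2 : ∀ i j : Fin D, (i : ℕ) < d → d ≤ (j : ℕ) →
      (c i j) ^ 2 * δd ^ 2 ≤ (b' i j) ^ 2 := by
    intro i j hi hj
    have hg := hgap2 i j hi hj
    have h1 : δd ^ 2 ≤ (lamA i - lamB j) ^ 2 := pow_le_pow_left₀ hδdpos.le hg 2
    calc (c i j) ^ 2 * δd ^ 2 ≤ (c i j) ^ 2 * (lamA i - lamB j) ^ 2 :=
          mul_le_mul_of_nonneg_left h1 (sq_nonneg _)
      _ = (b' i j) ^ 2 := by rw [hR1 i j]; ring
  -- Parseval identities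
  have hnormA : ∀ i : Fin D, ∑ k, VA i k * VA i k = 1 := by
    intro i
    have h1 : ⟪VA i, VA i⟫ = 1 := by
      rw [real_inner_self_eq_norm_sq, hVAON.1 i]; norm_num
    rw [← ip_eq]; exact h1
  have hnormB : ∀ j : Fin D, ∑ k, VB j k * VB j k = 1 := by
    intro j
    have h1 : ⟪VB j, VB j⟫ = 1 := by
      rw [real_inner_self_eq_norm_sq, hVBON.1 j]; norm_num
    rw [← ip_eq]; exact h1
  have hrow : ∀ i : Fin D, ∑ j, (c i j) ^ 2 = 1 := by
    intro i
    have hp := dk_parseval VB hVBON (VA i) (VA i)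
    rw [hnormA i] at hp
    rw [← hp]
    refine Finset.sum_congr rfl fun j _ => ?_
    rw [sq, hcdef]
    congr 1
    exact Finset.sum_congr rfl fun k _ => mul_comm _ _
  have hcol : ∀ j : Fin D, ∑ i, (c i j) ^ 2 = 1 := by
    intro j
    have hp := dk_parseval VA hVAON (VB j) (VB j)
    rw [hnormB j] at hp
    rw [← hp]
    refine Finset.sum_congr rfl fun i _ => ?_
    rw [sq, hcdef]
    congr 1
    exact Finset.sum_congr rfl fun k _ => mul_comm _ _
  -- Frobenius norm of B in the mixed bases
  have hR2 : ∑ i, ∑ j, (b' i j) ^ 2 = ∑ l, ∑ k, (B l k) ^ 2 := by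
    have hBsym' : ∀ l k, B l k = B k l := fun l k => by
      have := congrFun (congrFun hBsymm k) l
      simpa [Matrix.transpose_apply] using this
    set w : Fin D → Fin D → ℝ := fun i k => ∑ l, B k l * VA i l with hwdef
    have hswap : ∀ i j : Fin D, b' i j = ∑ k, w i k * VB j k := by
      intro i j
      calc b' i j = ∑ l, ∑ k, (B l k * VB j k) * VA i l := by
            rw [hb'def]
            exact Finset.sum_congr rfl fun l _ => Finset.sum_mul _ _ _
        _ = ∑ k, ∑ l, (B l k * VB j k) * VA i l := Finset.sum_comm
        _ = ∑ k, w i k * VB j k := by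
            refine Finset.sum_congr rfl fun k _ => ?_
            rw [hwdef, Finset.sum_mul]
            exact Finset.sum_congr rfl fun l _ => by rw [hBsym' l k]; ring
    have hstep : ∀ i : Fin D, ∑ j, (b' i j) ^ 2 = ∑ k, (w i k) ^ 2 := by
      intro i
      have hp := dk_parseval VB hVBON
        (WithLp.toLp 2 (fun k => w i k))
        (WithLp.toLp 2 (fun k => w i k))
      calc ∑ j, (b' i j) ^ 2
          = ∑ j, (∑ k, w i k * VB j k) * (∑ k, VB j k * w i k) := by
            refine Finset.sum_congr rfl fun j _ => ?_
            rw [hswap i j, sq]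
            congr 1
            exact Finset.sum_congr rfl fun k _ => mul_comm _ _
        _ = ∑ k, w i k * w i k := hp
        _ = ∑ k, (w i k) ^ 2 := Finset.sum_congr rfl fun k _ => (sq _).symm
    calc ∑ i, ∑ j, (b' i j) ^ 2 = ∑ i, ∑ k, (w i k) ^ 2 :=
          Finset.sum_congr rfl fun i _ => hstep i
      _ = ∑ k, ∑ i, (w i k) ^ 2 := Finset.sum_comm
      _ = ∑ l, ∑ k, (B l k) ^ 2 := by
          refine Finset.sum_congr rfl fun k _ => ?_
          have hp := dk_parseval VA hVAON
            (WithLp.toLp 2 (fun l => B k l))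
            (WithLp.toLp 2 (fun l => B k l))
          calc ∑ i, (w i k) ^ 2
              = ∑ i, (∑ l, B k l * VA i l) * (∑ l, VA i l * B k l) := by
                refine Finset.sum_congr rfl fun i _ => ?_
                rw [hwdef, sq]
                congr 1
                exact Finset.sum_congr rfl fun l _ => mul_comm _ _
            _ = ∑ l, B k l * B k l := hp
            _ = ∑ l, (B k l) ^ 2 := Finset.sum_congr rfl fun l _ => (sq _).symm
  -- the index sets
  set lt : Finset (Fin D) := Finset.univ.filter (fun i : Fin D => (i : ℕ) < d) with hltdef
  set nlt : Finset (Fin D) := Finset.univ.filter (fun i : Fin D => ¬ (i : ℕ) < d) with hnltdef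
  have hcard : ∑ i ∈ lt, (1 : ℝ) = d := by
    rw [← dk_sum_cast hdD.le (fun _ => (1 : ℝ))]
    simp
  -- trace identities
  set Q : Matrix (Fin D) (Fin D) ℝ := projMatrix (fun j : Fin d => VB (Fin.castLE hdD.le j))
    with hQdef
  set P : Matrix (Fin D) (Fin D) ℝ := projMatrix (fun j : Fin d => VA (Fin.castLE hdD.le j))
    with hPdef
  set S : ℝ := ∑ i ∈ lt, ∑ j ∈ lt, (c i j) ^ 2 with hSdef
  have hE3 : ∑ i, ∑ k, Q i k * P i k = S := by
    rw [hQdef, hPdef, dk_proj_inner]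
    have h1 : ∀ j j' : Fin d,
        (∑ r, VB (Fin.castLE hdD.le j) r * VA (Fin.castLE hdD.le j') r)
          = c (Fin.castLE hdD.le j') (Fin.castLE hdD.le j) := by
      intro j j'
      rw [hcdef]
      exact Finset.sum_congr rfl fun r _ => mul_comm _ _
    calc ∑ j : Fin d, ∑ j' : Fin d,
          (∑ r, VB (Fin.castLE hdD.le j) r * VA (Fin.castLE hdD.le j') r) ^ 2
        = ∑ j : Fin d, ∑ j' : Fin d,
            (c (Fin.castLE hdD.le j') (Fin.castLE hdD.le j)) ^ 2 := by
          refine Finset.sum_congr rfl fun j _ => Finset.sum_congr rfl fun j' _ => ?_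
          rw [h1 j j']
      _ = ∑ j' : Fin d, ∑ j : Fin d,
            (c (Fin.castLE hdD.le j') (Fin.castLE hdD.le j)) ^ 2 := Finset.sum_comm
      _ = ∑ j' : Fin d, ∑ jj ∈ lt, (c (Fin.castLE hdD.le j') jj) ^ 2 := by
          refine Finset.sum_congr rfl fun j' _ => ?_
          exact dk_sum_cast hdD.le (fun jj => (c (Fin.castLE hdD.le j') jj) ^ 2)
      _ = S := by
          rw [hSdef]
          exact dk_sum_cast hdD.le (fun ii => ∑ jj ∈ lt, (c ii jj) ^ 2)
  have hite : ∀ (V : Fin D → EuclideanSpace ℝ (Fin D)), Orthonormal ℝ V →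
      ∀ a b : Fin D, ∑ r, V a r * V b r = if a = b then 1 else 0 := by
    intro V hV a b
    have := orthonormal_iff_ite.mp hV a b
    rw [ip_eq] at this
    simpa using this
  have hEproj : ∀ (V : Fin D → EuclideanSpace ℝ (Fin D)), Orthonormal ℝ V →
      ∑ i, ∑ k, (projMatrix (fun j : Fin d => V (Fin.castLE hdD.le j))) i k
        * (projMatrix (fun j : Fin d => V (Fin.castLE hdD.le j))) i k = d := by
    intro V hV
    rw [dk_proj_inner]
    have h1 : ∀ j j' : Fin d,
        (∑ r, V (Fin.castLE hdD.le j) r * V (Fin.castLE hdD.le j') r) ^ 2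
          = if j = j' then (1 : ℝ) else 0 := by
      intro j j'
      rw [hite V hV]
      by_cases h : j = j'
      · simp [h]
      · have : Fin.castLE hdD.le j ≠ Fin.castLE hdD.le j' :=
          fun hc => h (Fin.castLE_injective hdD.le hc)
        simp [h, this]
      
    calc ∑ j : Fin d, ∑ j' : Fin d,
          (∑ r, V (Fin.castLE hdD.le j) r * V (Fin.castLE hdD.le j') r) ^ 2
        = ∑ j : Fin d, ∑ j' : Fin d, if j = j' then (1 : ℝ) else 0 := by
          refine Finset.sum_congr rfl fun j _ => Finset.sum_congr rfl fun j' _ => h1 j j'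
      _ = (d : ℝ) := by simp
  have hE1 := hEproj VB hVBON
  have hE2 := hEproj VA hVAON
  -- expansion of the Frobenius norm of the difference
  have hexp : ∑ i, ∑ k, ((Q - P) i k) ^ 2
      = (∑ i, ∑ k, Q i k * Q i k) + (∑ i, ∑ k, P i k * P i k)
        - 2 * (∑ i, ∑ k, Q i k * P i k) := by
    have h1 : ∀ i k : Fin D, ((Q - P) i k) ^ 2
        = Q i k * Q i k + P i k * P i k - 2 * (Q i k * P i k) := by
      intro i k
      rw [Matrix.sub_apply]; ring
    calc ∑ i, ∑ k, ((Q - P) i k) ^ 2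
        = ∑ i, ∑ k, (Q i k * Q i k + P i k * P i k - 2 * (Q i k * P i k)) := by
          exact Finset.sum_congr rfl fun i _ => Finset.sum_congr rfl fun k _ => h1 i k
      _ = _ := by
          rw [Finset.mul_sum, ← Finset.sum_add_distrib, ← Finset.sum_sub_distrib]
          refine Finset.sum_congr rfl fun i _ => ?_
          rw [Finset.mul_sum, ← Finset.sum_add_distrib, ← Finset.sum_sub_distrib]
  have hF2QP : ∑ i, ∑ k, ((Q - P) i k) ^ 2 = 2 * (d : ℝ) - 2 * S := by
    rw [hexp, hE1, hE2, hE3]; ring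
  -- the off-diagonal mass identities
  have hT1 : ∑ i ∈ nlt, ∑ j ∈ lt, (c i j) ^ 2 = (d : ℝ) - S := by
    have htot : ∑ i : Fin D, ∑ j ∈ lt, (c i j) ^ 2 = (d : ℝ) := by
      rw [Finset.sum_comm]
      calc ∑ j ∈ lt, ∑ i : Fin D, (c i j) ^ 2 = ∑ j ∈ lt, (1 : ℝ) :=
            Finset.sum_congr rfl fun j _ => hcol j
        _ = (d : ℝ) := hcard
    have hsp := Finset.sum_filter_add_sum_filter_not Finset.univ
      (fun i : Fin D => (i : ℕ) < d) (fun i => ∑ j ∈ lt, (c i j) ^ 2)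
    rw [← hltdef, ← hnltdef] at hsp
    rw [htot] at hsp
    rw [← hSdef] at hsp
    linarith
  have hT2 : ∑ i ∈ lt, ∑ j ∈ nlt, (c i j) ^ 2 = (d : ℝ) - S := by
    have hstep : ∀ i : Fin D, ∑ j ∈ nlt, (c i j) ^ 2 = 1 - ∑ j ∈ lt, (c i j) ^ 2 := by
      intro i
      have hsp := Finset.sum_filter_add_sum_filter_not Finset.univ
        (fun j : Fin D => (j : ℕ) < d) (fun j => (c i j) ^ 2)
      rw [← hltdef, ← hnltdef] at hsp
      rw [hrow i] at hsp
      linarith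
    calc ∑ i ∈ lt, ∑ j ∈ nlt, (c i j) ^ 2
        = ∑ i ∈ lt, (1 - ∑ j ∈ lt, (c i j) ^ 2) :=
          Finset.sum_congr rfl fun i _ => hstep i
      _ = (∑ i ∈ lt, (1 : ℝ)) - ∑ i ∈ lt, ∑ j ∈ lt, (c i j) ^ 2 := Finset.sum_sub_distrib _ _
      _ = (d : ℝ) - S := by rw [hcard, hSdef]
  -- bounding the off-diagonal mass
  have hbound1 : (∑ i ∈ nlt, ∑ j ∈ lt, (c i j) ^ 2) * δd ^ 2
      ≤ ∑ i ∈ nlt, ∑ j ∈ lt, (b' i j) ^ 2 := by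
    rw [Finset.sum_mul]
    refine Finset.sum_le_sum fun i hi => ?_
    rw [Finset.sum_mul]
    refine Finset.sum_le_sum fun j hj => ?_
    have hi' : d ≤ (i : ℕ) := by
      have := (Finset.mem_filter.mp hi).2; omega
    have hj' : (j : ℕ) < d := (Finset.mem_filter.mp hj).2
    exact hkey1 i j hi' hj'
  have hbound2 : (∑ i ∈ lt, ∑ j ∈ nlt, (c i j) ^ 2) * δd ^ 2
      ≤ ∑ i ∈ lt, ∑ j ∈ nlt, (b' i j) ^ 2 := by
    rw [Finset.sum_mul]
    refine Finset.sum_le_sum fun i hi => ?_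
    rw [Finset.sum_mul]
    refine Finset.sum_le_sum fun j hj => ?_
    have hi' : (i : ℕ) < d := (Finset.mem_filter.mp hi).2
    have hj' : d ≤ (j : ℕ) := by
      have := (Finset.mem_filter.mp hj).2; omega
    exact hkey2 i j hi' hj'
  have hfull : (∑ i ∈ nlt, ∑ j ∈ lt, (b' i j) ^ 2) + (∑ i ∈ lt, ∑ j ∈ nlt, (b' i j) ^ 2)
      ≤ ∑ i, ∑ j, (b' i j) ^ 2 := by
    have hj : ∀ i : Fin D, ∑ j, (b' i j) ^ 2
        = (∑ j ∈ lt, (b' i j) ^ 2) + ∑ j ∈ nlt, (b' i j) ^ 2 := by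
      intro i
      exact (Finset.sum_filter_add_sum_filter_not Finset.univ
        (fun j : Fin D => (j : ℕ) < d) (fun j => (b' i j) ^ 2)).symm
    have hi : ∑ i : Fin D, ∑ j, (b' i j) ^ 2
        = (∑ i ∈ lt, ∑ j, (b' i j) ^ 2) + ∑ i ∈ nlt, ∑ j, (b' i j) ^ 2 :=
      (Finset.sum_filter_add_sum_filter_not Finset.univ
        (fun i : Fin D => (i : ℕ) < d) (fun i => ∑ j, (b' i j) ^ 2)).symm
    have e1 : ∑ i ∈ lt, ∑ j, (b' i j) ^ 2
        = (∑ i ∈ lt, ∑ j ∈ lt, (b' i j) ^ 2) + ∑ i ∈ lt, ∑ j ∈ nlt, (b' i j) ^ 2 := by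
      rw [← Finset.sum_add_distrib]
      exact Finset.sum_congr rfl fun i _ => hj i
    have e2 : ∑ i ∈ nlt, ∑ j, (b' i j) ^ 2
        = (∑ i ∈ nlt, ∑ j ∈ lt, (b' i j) ^ 2) + ∑ i ∈ nlt, ∑ j ∈ nlt, (b' i j) ^ 2 := by
      rw [← Finset.sum_add_distrib]
      exact Finset.sum_congr rfl fun i _ => hj i
    have n1 : (0 : ℝ) ≤ ∑ i ∈ lt, ∑ j ∈ lt, (b' i j) ^ 2 :=
      Finset.sum_nonneg fun i _ => Finset.sum_nonneg fun j _ => sq_nonneg _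
    have n2 : (0 : ℝ) ≤ ∑ i ∈ nlt, ∑ j ∈ nlt, (b' i j) ^ 2 :=
      Finset.sum_nonneg fun i _ => Finset.sum_nonneg fun j _ => sq_nonneg _
    linarith
  -- put everything together
  have hδsq : (0 : ℝ) < δd ^ 2 := by positivity
  have hmain : ∑ i, ∑ k, ((Q - P) i k) ^ 2 ≤ (∑ l, ∑ k, (B l k) ^ 2) / δd ^ 2 := by
    rw [le_div_iff₀ hδsq, hF2QP]
    have hid : (2 * (d : ℝ) - 2 * S) * δd ^ 2
        = (∑ i ∈ nlt, ∑ j ∈ lt, (c i j) ^ 2) * δd ^ 2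
          + (∑ i ∈ lt, ∑ j ∈ nlt, (c i j) ^ 2) * δd ^ 2 := by
      rw [hT1, hT2]; ring
    rw [hid]
    calc (∑ i ∈ nlt, ∑ j ∈ lt, (c i j) ^ 2) * δd ^ 2
          + (∑ i ∈ lt, ∑ j ∈ nlt, (c i j) ^ 2) * δd ^ 2
        ≤ (∑ i ∈ nlt, ∑ j ∈ lt, (b' i j) ^ 2) + (∑ i ∈ lt, ∑ j ∈ nlt, (b' i j) ^ 2) :=
          add_le_add hbound1 hbound2
      _ ≤ ∑ i, ∑ j, (b' i j) ^ 2 := hfull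
      _ = ∑ l, ∑ k, (B l k) ^ 2 := hR2
  have hsqrt : frobNorm (Q - P) ≤ Real.sqrt ((∑ l, ∑ k, (B l k) ^ 2) / δd ^ 2) := by
    rw [frobNorm]
    exact Real.sqrt_le_sqrt hmain
  have hBnn : (0 : ℝ) ≤ ∑ l, ∑ k, (B l k) ^ 2 :=
    Finset.sum_nonneg fun l _ => Finset.sum_nonneg fun k _ => sq_nonneg _
  have hrhs : Real.sqrt ((∑ l, ∑ k, (B l k) ^ 2) / δd ^ 2) = frobNorm B / δd := by
    rw [Real.sqrt_div hBnn, Real.sqrt_sq hδdpos.le, frobNorm]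
  rw [hrhs] at hsqrt
  exact hsqrt
end
end
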